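/- Let γ(x) = e^x, α = 0.95, and X uniform on [0,1]. Then the Bregman superquantile R(V) = ln( E[e^V 1_{V ≥ q_α^V}]/(1−α) ) satisfies R(2X) > 2R(X); explicitly, ln((e² − e^{1.9})/(2·0.05)) > 2 ln((e − e^{0.95})/0.05). Hence the exponential Bregman superquantile is neither subadditive nor positively homogeneous. -/

import Mathlib

open MeasureTheory

lemma exp_integral_Icc (c : ℝ) (hc : c ≠ 0) :
    (∫ x in Set.Icc (0.95:ℝ) 1, Real.exp (c * x)) = (Real.exp c - Real.exp (c * 0.95)) / c := by
  rw [MeasureTheory.integral_Icc_eq_integral_Ioc, ← intervalIntegral.integral_of_le (by norm_num)]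
  rw [intervalIntegral.integral_comp_mul_left Real.exp hc]
  rw [integral_exp]
  rw [smul_eq_mul]
  field_simp

lemma exp_point_05_lt : Real.exp 0.05 < 41/39 := by
  have h2 := (abs_le.mp (Real.exp_bound (x := 0.05) (by rw [abs_le]; norm_num)
    (n := 4) (by norm_num))).2
  simp only [Finset.sum_range_succ, Finset.sum_range_zero, Nat.factorial] at h2
  rw [show |(0.05:ℝ)| = 0.05 from abs_of_pos (by norm_num)] at h2
  norm_num at h2 ⊢
  linarith

lemma key_ineq :
    Real.log ((Real.exp 2 - Real.exp 1.9) / (2 * 0.05)) >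
      2 * Real.log ((Real.exp 1 - Real.exp 0.95) / 0.05) := by
  set t := Real.exp 0.05 with ht
  set s := Real.exp 0.95 with hs
  have hts : Real.exp 1 = s * t := by rw [ht, hs, ← Real.exp_add]; norm_num
  have ht2 : Real.exp 1.9 = s ^ 2 := by rw [hs, sq, ← Real.exp_add]; norm_num
  have he2 : Real.exp 2 = s ^ 2 * t ^ 2 := by
    rw [ht, hs, sq, sq, ← Real.exp_add, ← Real.exp_add, ← Real.exp_add]
    norm_num
  have hs0 : 0 < s := Real.exp_pos _
  have ht1 : 1 < t := by
    rw [ht]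
    calc (1:ℝ) = Real.exp 0 := (Real.exp_zero).symm
    _ < Real.exp 0.05 := Real.exp_lt_exp.mpr (by norm_num)
  have htu : t < 41/39 := exp_point_05_lt
  set a : ℝ := (Real.exp 1 - Real.exp 0.95) / 0.05 with ha
  set b : ℝ := (Real.exp 2 - Real.exp 1.9) / (2 * 0.05) with hb
  have ha0 : 0 < a := by
    rw [ha, hts]
    have : 0 < s * t - s := by nlinarith
    positivity
  have hba : a ^ 2 < b := by
    rw [ha, hb, hts, ht2, he2, ← hs]
    have h1 : 0 < s ^ 2 * (t - 1) * (41/39 - t) := by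
      have : 0 < t - 1 := by linarith
      have : 0 < 41/39 - t := by linarith
      positivity
    have expand : (s^2*t^2 - s^2)/(2*0.05) - ((s*t-s)/0.05)^2
        = 390 * (s ^ 2 * (t - 1) * (41/39 - t)) := by ring
    linarith
  calc 2 * Real.log a = Real.log (a ^ 2) := by rw [Real.log_pow]; push_cast; ring
  _ < Real.log b := Real.log_lt_log (by positivity) hba

/-- For `γ(x) = eˣ`, `α = 0.95` and `X` uniform on `[0,1]`, the Bregman superquantile
`R(λX) = ln(E[e^{λX} 1_{X ≥ α}]/(1-α))` satisfies `R(2X) > 2R(X)`: explicitly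
`ln((e² - e^{1.9})/(2·0.05)) > 2 ln((e - e^{0.95})/0.05)`.  Hence the exponential
Bregman superquantile is neither subadditive nor positively homogeneous. -/
theorem exp_bregman_not_subadditive
    (R : ℝ → ℝ)
    (hR : ∀ lam : ℝ, R lam =
      Real.log ((∫ x in Set.Icc (0.95:ℝ) 1, Real.exp (lam * x)) / (1 - 0.95))) :
    R 2 > 2 * R 1 ∧
      Real.log ((Real.exp 2 - Real.exp 1.9) / (2 * 0.05)) >
        2 * Real.log ((Real.exp 1 - Real.exp 0.95) / 0.05) ∧
      R 2 ≠ 2 * R 1 := by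
  have h1 : R 1 = Real.log ((Real.exp 1 - Real.exp 0.95) / 0.05) := by
    rw [hR 1, exp_integral_Icc 1 one_ne_zero]
    norm_num
  have h2 : R 2 = Real.log ((Real.exp 2 - Real.exp 1.9) / (2 * 0.05)) := by
    rw [hR 2, exp_integral_Icc 2 two_ne_zero]
    norm_num [div_div]
  have key := key_ineq
  refine ⟨by rw [h1, h2]; exact key, key, by rw [h1, h2]; exact ne_of_gt key⟩
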